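/- Let a, b, c, k₁, k₂, k₃ be positive integers. The following are equivalent: (1) for every finite colouring of the positive integers there exist an infinite set H of positive integers and a colour class C such that for all h₁, h₂ ∈ H with h₁ < h₂ there is z ∈ C with a·h₁^{k₁} + b·h₂^{k₂} = c·z^{k₃} (i.e. the equation a·x^{k₁} + b·y^{k₂} = c·z^{k₃} is Ramsey partition regular in (x,y)∣z); (2) k₃ = 1. -/

import Mathlib

/-- Pigeonhole: an infinite set coloured with finitely many colours has an
infinite colour class. -/
lemma pigeon_inf {α : Type*} {r : ℕ} (c : α → Fin r) {S : Set α} (hS : S.Infinite) :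
    ∃ j : Fin r, {n | n ∈ S ∧ c n = j}.Infinite := by
  by_contra h
  push_neg at h
  have hsub : S ⊆ ⋃ j, {n | n ∈ S ∧ c n = j} := fun x hx => Set.mem_iUnion.2 ⟨c x, hx, rfl⟩
  exact hS ((Set.finite_iUnion h).subset hsub)

lemma ramsey_step {r : ℕ} (f : ℕ → ℕ → Fin r) (A : Set ℕ) (hA : A.Infinite) :
    ∃ x ∈ A, ∃ j : Fin r, ∃ B : Set ℕ, B ⊆ A ∧ B.Infinite ∧ ∀ y ∈ B, x < y ∧ f x y = j := by
  obtain ⟨x, hx⟩ := hA.nonempty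
  have hA' : {y | y ∈ A ∧ x < y}.Infinite := by
    by_contra h
    rw [Set.not_infinite] at h
    have hsub : A ⊆ {y | y ∈ A ∧ x < y} ∪ Set.Iic x := by
      intro y hy
      by_cases hxy : x < y
      · exact Or.inl ⟨hy, hxy⟩
      · exact Or.inr (le_of_not_gt hxy)
    exact hA ((h.union (Set.finite_Iic x)).subset hsub)
  obtain ⟨j, hj⟩ := pigeon_inf (f x) hA'
  exact ⟨x, hx, j, _, fun y hy => hy.1.1, hj, fun y hy => ⟨hy.1.2, hy.2⟩⟩

/-- Infinite Ramsey theorem for pairs on an infinite subset of `ℕ`. -/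
lemma ramsey_pairs {r : ℕ} (f : ℕ → ℕ → Fin r) {S : Set ℕ} (hS : S.Infinite) :
    ∃ T : Set ℕ, T ⊆ S ∧ T.Infinite ∧ ∃ j : Fin r,
      ∀ x ∈ T, ∀ y ∈ T, x < y → f x y = j := by
  choose x hx j B hBsub hBinf hB using
    fun A : {A : Set ℕ // A.Infinite} => ramsey_step f A.1 A.2
  let chain : ℕ → {A : Set ℕ // A.Infinite} :=
    fun n => Nat.rec ⟨S, hS⟩ (fun _ A => ⟨B A, hBinf A⟩) n
  have chain_succ : ∀ n, (chain (n + 1)).1 = B (chain n) := fun n => rfl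
  have mono : ∀ m n, m ≤ n → (chain n).1 ⊆ (chain m).1 := by
    intro m n h
    induction n, h using Nat.le_induction with
    | base => exact subset_rfl
    | succ n hmn ih => exact fun y hy => ih (hBsub (chain n) hy)
  set u : ℕ → ℕ := fun n => x (chain n) with hu
  have hu_mem : ∀ n, u n ∈ (chain n).1 := fun n => hx (chain n)
  have key : ∀ m n, m < n → u n ∈ B (chain m) := by
    intro m n h
    have := mono (m + 1) n h (hu_mem n)
    rwa [chain_succ] at this
  have hlt : ∀ m n, m < n → u m < u n ∧ f (u m) (u n) = j (chain m) :=
    fun m n h => hB (chain m) _ (key m n h)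
  have humono : StrictMono u := fun m n h => (hlt m n h).1
  have huS : ∀ n, u n ∈ S := fun n => mono 0 n (Nat.zero_le n) (hu_mem n)
  obtain ⟨J, hJ⟩ := pigeon_inf (fun n => j (chain n))
    (Set.infinite_univ : (Set.univ : Set ℕ).Infinite)
  refine ⟨u '' {n | n ∈ Set.univ ∧ j (chain n) = J}, ?_, ?_, J, ?_⟩
  · rintro _ ⟨n, _, rfl⟩; exact huS n
  · exact hJ.image (humono.injective.injOn)
  · rintro _ ⟨m, hm, rfl⟩ _ ⟨n, hn, rfl⟩ hlt'
    have hmn : m < n := humono.lt_iff_lt.mp hlt'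
    rw [(hlt m n hmn).2, hm.2]

lemma aux_pow (t m : ℕ) : t ^ (m + 2) + 2 * t + 1 ≤ (t + 1) ^ (m + 2) := by
  have h1 : t ^ m ≤ (t + 1) ^ m := Nat.pow_le_pow_left (Nat.le_succ t) m
  have h2 : 1 ≤ (t + 1) ^ m := Nat.one_le_pow _ _ (Nat.succ_pos t)
  calc t ^ (m + 2) + 2 * t + 1 = t ^ m * t ^ 2 + 1 * (2 * t + 1) := by ring
    _ ≤ (t + 1) ^ m * t ^ 2 + (t + 1) ^ m * (2 * t + 1) :=
        Nat.add_le_add (Nat.mul_le_mul_right _ h1) (Nat.mul_le_mul_right _ h2)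
    _ = (t + 1) ^ m * (t + 1) ^ 2 := by ring
    _ = (t + 1) ^ (m + 2) := (pow_add _ m 2).symm

/-- The equation `a·x^{k₁} + b·y^{k₂} = c·z^{k₃}` is Ramsey partition regular in
`(x,y) ∣ z` over the positive integers if and only if `k₃ = 1`. -/
theorem stmt_16 (a b c k₁ k₂ k₃ : ℕ)
    (ha : 0 < a) (hb : 0 < b) (hc : 0 < c)
    (hk₁ : 0 < k₁) (hk₂ : 0 < k₂) (hk₃ : 0 < k₃) :
    (∀ r : ℕ, ∀ col : ℕ → Fin r,
      ∃ H : Set ℕ, H.Infinite ∧ (∀ h ∈ H, 0 < h) ∧ ∃ j : Fin r,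
        ∀ h₁ ∈ H, ∀ h₂ ∈ H, h₁ < h₂ →
          ∃ z : ℕ, 0 < z ∧ col z = j ∧ a * h₁ ^ k₁ + b * h₂ ^ k₂ = c * z ^ k₃) ↔
    k₃ = 1 := by
  constructor
  · intro hPR
    by_contra hne
    obtain ⟨m, rfl⟩ : ∃ m, k₃ = m + 2 := ⟨k₃ - 2, by omega⟩
    obtain ⟨H, hHinf, hHpos, j, hH⟩ := hPR 1 (fun _ => 0)
    obtain ⟨h, hh⟩ := hHinf.nonempty
    obtain ⟨h', hh', hlt1⟩ := hHinf.exists_gt h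
    have hpow : h ^ k₁ < h' ^ k₁ := Nat.pow_lt_pow_left hlt1 hk₁.ne'
    have hmul : a * h ^ k₁ < a * h' ^ k₁ := mul_lt_mul_of_pos_left hpow ha
    set D := a * h' ^ k₁ - a * h ^ k₁ with hDdef
    have hDpos : 0 < D := by omega
    have hDeq : a * h' ^ k₁ = a * h ^ k₁ + D := by omega
    obtain ⟨h₂, hh₂, hlt2⟩ := hHinf.exists_gt (max h' (c * D ^ (m + 2)))
    have hlt2a : h' < h₂ := lt_of_le_of_lt (le_max_left _ _) hlt2
    have hlt2b : c * D ^ (m + 2) < h₂ := lt_of_le_of_lt (le_max_right _ _) hlt2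
    obtain ⟨z, hzpos, -, hz⟩ := hH h hh h₂ hh₂ (hlt1.trans hlt2a)
    obtain ⟨z', hz'pos, -, hz'⟩ := hH h' hh' h₂ hh₂ hlt2a
    have keyeq : c * z' ^ (m + 2) = c * z ^ (m + 2) + D := by
      rw [← hz', ← hz]; omega
    have hzz : z < z' := by
      have h1 : z ^ (m + 2) < z' ^ (m + 2) := by
        have : c * z ^ (m + 2) < c * z' ^ (m + 2) := by omega
        exact lt_of_mul_lt_mul_left this (Nat.zero_le c)
      exact (Nat.pow_lt_pow_iff_left (by omega)).mp h1
    obtain ⟨t, rfl⟩ : ∃ t, z' = t + 1 := ⟨z' - 1, by omega⟩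
    have hzt : z ≤ t := by omega
    have hstep : z ^ (m + 2) + 2 * t + 1 ≤ (t + 1) ^ (m + 2) :=
      le_trans (by have := Nat.pow_le_pow_left hzt (m + 2); omega) (aux_pow t m)
    -- from keyeq : c * (t+1)^(m+2) = c * z^(m+2) + D, deduce t + 1 ≤ D
    have hzD : t + 1 ≤ D := by
      have h2 : c * z ^ (m + 2) + c * (2 * t + 1) ≤ c * (t + 1) ^ (m + 2) := by
        calc c * z ^ (m + 2) + c * (2 * t + 1) = c * (z ^ (m + 2) + 2 * t + 1) := by ring
          _ ≤ c * (t + 1) ^ (m + 2) := Nat.mul_le_mul_left c hstep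
      have h4 : 2 * t + 1 ≤ c * (2 * t + 1) := Nat.le_mul_of_pos_left _ hc
      omega
    have hbig : c * (t + 1) ^ (m + 2) ≤ c * D ^ (m + 2) :=
      Nat.mul_le_mul_left c (Nat.pow_le_pow_left hzD _)
    have hsmall : h₂ ≤ b * h₂ ^ k₂ :=
      le_trans (Nat.le_self_pow hk₂.ne' h₂) (Nat.le_mul_of_pos_left _ hb)
    have : b * h₂ ^ k₂ ≤ c * (t + 1) ^ (m + 2) := by omega
    omega
  · rintro rfl
    intro r col
    let S : Set ℕ := {n | 0 < n ∧ c ∣ n}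
    have hS : S.Infinite := by
      refine Set.infinite_of_injective_forall_mem (f := fun n : ℕ => c * (n + 1)) ?_ ?_
      · intro p q hpq
        simp only at hpq
        have := Nat.eq_of_mul_eq_mul_left hc hpq
        omega
      · intro n
        exact ⟨Nat.mul_pos hc (Nat.succ_pos n), Dvd.intro _ rfl⟩
    let f : ℕ → ℕ → Fin r := fun h₁ h₂ => col ((a * h₁ ^ k₁ + b * h₂ ^ k₂) / c)
    obtain ⟨T, hTS, hTinf, j, hT⟩ := ramsey_pairs f hS
    refine ⟨T, hTinf, fun h hhT => (hTS hhT).1, j, ?_⟩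
    intro h₁ h1 h₂ h2 hlt
    have hdiv : c ∣ a * h₁ ^ k₁ + b * h₂ ^ k₂ :=
      dvd_add (Dvd.dvd.mul_left (dvd_pow (hTS h1).2 hk₁.ne') a)
        (Dvd.dvd.mul_left (dvd_pow (hTS h2).2 hk₂.ne') b)
    have hpos : 0 < a * h₁ ^ k₁ + b * h₂ ^ k₂ :=
      Nat.add_pos_left (Nat.mul_pos ha (Nat.pow_pos (hTS h1).1)) _
    refine ⟨(a * h₁ ^ k₁ + b * h₂ ^ k₂) / c, ?_, hT h₁ h1 h₂ h2 hlt, ?_⟩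
    · exact Nat.div_pos (Nat.le_of_dvd hpos hdiv) hc
    · rw [pow_one, Nat.mul_div_cancel' hdiv]
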